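/- In the 2-state model, the effective diffusivity D_eff := (1/(2E(ΔT)))( Var(ΔX) + v_eff² Var(ΔT) − 2 v_eff Cov(ΔX, ΔT) ) equals D β₁/(β₁+β₂) + v² β₁ β₂/(β₁+β₂)³, where v_eff = v β₂/(β₁+β₂). -/

import Mathlib

open MeasureTheory ProbabilityTheory

open Real Set
open scoped ENNReal NNReal

lemma sqrt_le_one_add_abs (a : ℝ) : Real.sqrt a ≤ 1 + |a| := by
  rcases le_total a 1 with h | h
  · calc Real.sqrt a ≤ Real.sqrt 1 := Real.sqrt_le_sqrt h
      _ = 1 := Real.sqrt_one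
      _ ≤ 1 + |a| := le_add_of_nonneg_right (abs_nonneg a)
  · calc Real.sqrt a ≤ Real.sqrt (a ^ 2) := Real.sqrt_le_sqrt (by nlinarith)
      _ = |a| := Real.sqrt_sq_eq_abs a
      _ ≤ 1 + |a| := by linarith

lemma expMeasure_eq_withDensity (r : ℝ) :
    expMeasure r = (volume : Measure ℝ).withDensity (gammaPDF 1 r) := rfl

lemma expM_ae_nonneg (r : ℝ) : ∀ᵐ x ∂(expMeasure r), 0 ≤ x := by
  rw [ae_iff]
  have : {x : ℝ | ¬ 0 ≤ x} = Iio 0 := by ext x; simp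
  rw [this, expMeasure_eq_withDensity, withDensity_apply _ measurableSet_Iio]
  have h0 : ∀ x ∈ Iio (0:ℝ), gammaPDF 1 r x = 0 := fun x hx => gammaPDF_of_neg hx
  rw [setLIntegral_congr_fun measurableSet_Iio h0]
  simp

lemma gammaPDF_one_toReal (r : ℝ) (hr : 0 < r) (x : ℝ) :
    (gammaPDF 1 r x).toReal = Set.indicator (Ici 0) (fun y => r * Real.exp (-(r * y))) x := by
  have hval : r ^ (1:ℝ) / Real.Gamma 1 * x ^ ((1:ℝ) - 1) * rexp (-(r * x))
      = r * rexp (-(r * x)) := by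
    rw [Real.Gamma_one, Real.rpow_one, sub_self, Real.rpow_zero]; ring
  rcases le_or_gt 0 x with hx | hx
  · rw [gammaPDF_of_nonneg hx, Set.indicator_of_mem (mem_Ici.2 hx), hval,
      ENNReal.toReal_ofReal (by positivity)]
  · rw [gammaPDF_of_neg hx, Set.indicator_of_notMem (by simpa using hx)]
    simp

lemma integral_expMeasure (r : ℝ) (hr : 0 < r) (g : ℝ → ℝ) :
    ∫ x, g x ∂(expMeasure r) = ∫ x in Ioi 0, g x * (r * Real.exp (-(r * x))) := by
  rw [expMeasure_eq_withDensity]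
  have hpdf : gammaPDF 1 r = fun x => ((gammaPDFReal 1 r x).toNNReal : ℝ≥0∞) := rfl
  rw [hpdf, integral_withDensity_eq_integral_smul
    ((measurable_gammaPDFReal 1 r).real_toNNReal) g]
  have : ∀ x : ℝ, (gammaPDFReal 1 r x).toNNReal • g x
      = Set.indicator (Ici 0) (fun y => g y * (r * Real.exp (-(r * y)))) x := by
    intro x
    have h1 : ((gammaPDFReal 1 r x).toNNReal : ℝ) = (gammaPDF 1 r x).toReal := rfl
    have h2 := gammaPDF_one_toReal r hr x
    rcases le_or_gt 0 x with hx | hx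
    · rw [NNReal.smul_def, smul_eq_mul, h1, h2, Set.indicator_of_mem (mem_Ici.2 hx),
        Set.indicator_of_mem (mem_Ici.2 hx)]
      ring
    · rw [NNReal.smul_def, smul_eq_mul, h1, h2, Set.indicator_of_notMem (by simpa using hx),
        Set.indicator_of_notMem (by simpa using hx)]
      ring
  rw [integral_congr_ae (Filter.Eventually.of_forall this), integral_indicator measurableSet_Ici,
    ← integral_Ici_eq_integral_Ioi]

lemma integrable_expMeasure (r : ℝ) (hr : 0 < r) {g : ℝ → ℝ} (hgm : Measurable g)
    (hgi : IntegrableOn (fun x => g x * (r * Real.exp (-(r * x)))) (Ioi 0)) :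
    Integrable g (expMeasure r) := by
  rw [expMeasure_eq_withDensity]
  have hpdf : gammaPDF 1 r = fun x => ENNReal.ofReal (gammaPDFReal 1 r x) := rfl
  rw [hpdf, integrable_withDensity_iff ((measurable_gammaPDFReal 1 r).ennreal_ofReal)
    (Filter.Eventually.of_forall fun x => ENNReal.ofReal_lt_top)]
  have : (fun x => g x * (ENNReal.ofReal (gammaPDFReal 1 r x)).toReal)
      = Set.indicator (Ici 0) (fun y => g y * (r * Real.exp (-(r * y)))) := by
    funext x
    show g x * (gammaPDF 1 r x).toReal = _
    rw [gammaPDF_one_toReal r hr x]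
    rcases le_or_gt 0 x with hx | hx
    · rw [Set.indicator_of_mem (mem_Ici.2 hx), Set.indicator_of_mem (mem_Ici.2 hx)]
    · rw [Set.indicator_of_notMem (by simpa using hx), Set.indicator_of_notMem (by simpa using hx)]
      ring
  rw [this, integrable_indicator_iff measurableSet_Ici, IntegrableOn,
    ← restrict_Ioi_eq_restrict_Ici]
  exact hgi

lemma expM_integral_one {r : ℝ} (hr : 0 < r) : ∫ x, x ∂(expMeasure r) = 1 / r := by
  rw [integral_expMeasure r hr]
  have h : ∀ x ∈ Ioi (0:ℝ), x * (r * Real.exp (-(r * x))) = r * (x ^ ((2:ℝ) - 1) * Real.exp (-(r * x))) := by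
    intro x hx
    rw [show (2:ℝ) - 1 = 1 by norm_num, Real.rpow_one]; ring
  rw [setIntegral_congr_fun measurableSet_Ioi h, integral_const_mul,
    Real.integral_rpow_mul_exp_neg_mul_Ioi (by norm_num) hr]
  rw [show (2:ℝ) = (1:ℝ) + 1 by norm_num, Real.Gamma_add_one one_ne_zero, Real.Gamma_one,
    show (1:ℝ) + 1 = ((2:ℕ):ℝ) by norm_num, Real.rpow_natCast]
  field_simp

lemma expM_integral_sq {r : ℝ} (hr : 0 < r) : ∫ x, x ^ 2 ∂(expMeasure r) = 2 / r ^ 2 := by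
  rw [integral_expMeasure r hr]
  have h : ∀ x ∈ Ioi (0:ℝ), x ^ 2 * (r * Real.exp (-(r * x))) = r * (x ^ ((3:ℝ) - 1) * Real.exp (-(r * x))) := by
    intro x hx
    rw [show (3:ℝ) - 1 = ((2:ℕ):ℝ) by norm_num, Real.rpow_natCast]; ring
  rw [setIntegral_congr_fun measurableSet_Ioi h, integral_const_mul,
    Real.integral_rpow_mul_exp_neg_mul_Ioi (by norm_num) hr,
    show (3:ℝ) = ((2:ℕ):ℝ) + 1 by norm_num, Real.Gamma_nat_eq_factorial,
    show ((2:ℕ):ℝ) + 1 = ((3:ℕ):ℝ) by norm_num, Real.rpow_natCast]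
  have hrne : r ≠ 0 := ne_of_gt hr
  field_simp
  ring

lemma expM_integrable_one {r : ℝ} (hr : 0 < r) : Integrable (fun x : ℝ => x) (expMeasure r) := by
  refine integrable_expMeasure r hr measurable_id ?_
  have h := (integrableOn_rpow_mul_exp_neg_mul_rpow (p := 1) (s := 1) (b := r)
    (by norm_num) (by norm_num) hr).const_mul r
  refine MeasureTheory.IntegrableOn.congr_fun h (fun x hx => ?_) measurableSet_Ioi
  rw [Real.rpow_one, neg_mul]; ring

lemma expM_integrable_sq {r : ℝ} (hr : 0 < r) :
    Integrable (fun x : ℝ => x ^ 2) (expMeasure r) := by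
  refine integrable_expMeasure r hr (measurable_id.pow_const 2) ?_
  have h := (integrableOn_rpow_mul_exp_neg_mul_rpow (p := 1) (s := 2) (b := r)
    (by norm_num) (by norm_num) hr).const_mul r
  refine MeasureTheory.IntegrableOn.congr_fun h (fun x hx => ?_) measurableSet_Ioi
  rw [Real.rpow_one, show ((2:ℝ)) = ((2:ℕ):ℝ) by norm_num, Real.rpow_natCast, neg_mul]; ring

lemma gaussianPDFReal_01 (x : ℝ) :
    gaussianPDFReal 0 1 x = (Real.sqrt (2 * π))⁻¹ * Real.exp (-(1/2) * x ^ 2) := by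
  rw [gaussianPDFReal]
  simp only [NNReal.coe_one, mul_one, sub_zero]
  congr 2
  ring

lemma integral_gauss01 (g : ℝ → ℝ) :
    ∫ x, g x ∂(gaussianReal 0 1)
      = ∫ x, g x * ((Real.sqrt (2 * π))⁻¹ * Real.exp (-(1/2) * x ^ 2)) := by
  rw [gaussianReal_of_var_ne_zero 0 one_ne_zero]
  have hpdf : gaussianPDF 0 1 = fun x => ((gaussianPDFReal 0 1 x).toNNReal : ℝ≥0∞) := rfl
  rw [hpdf, integral_withDensity_eq_integral_smul
    ((measurable_gaussianPDFReal 0 1).real_toNNReal) g]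
  refine integral_congr_ae (Filter.Eventually.of_forall fun x => ?_)
  show (gaussianPDFReal 0 1 x).toNNReal • g x = _
  rw [NNReal.smul_def, smul_eq_mul, Real.coe_toNNReal _ (gaussianPDFReal_nonneg 0 1 x),
    gaussianPDFReal_01]
  ring

lemma integrable_gauss01 {g : ℝ → ℝ} (hgm : Measurable g)
    (hgi : Integrable (fun x => g x * Real.exp (-(1/2) * x ^ 2))) :
    Integrable g (gaussianReal 0 1) := by
  rw [gaussianReal_of_var_ne_zero 0 one_ne_zero]
  have hpdf : gaussianPDF 0 1 = fun x => ENNReal.ofReal (gaussianPDFReal 0 1 x) := rfl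
  rw [hpdf, integrable_withDensity_iff ((measurable_gaussianPDFReal 0 1).ennreal_ofReal)
    (Filter.Eventually.of_forall fun x => ENNReal.ofReal_lt_top)]
  have : (fun x => g x * (ENNReal.ofReal (gaussianPDFReal 0 1 x)).toReal)
      = fun x => (Real.sqrt (2 * π))⁻¹ * (g x * Real.exp (-(1/2) * x ^ 2)) := by
    funext x
    rw [ENNReal.toReal_ofReal (gaussianPDFReal_nonneg 0 1 x), gaussianPDFReal_01]
    ring
  rw [this]
  exact hgi.const_mul _

lemma gauss01_integrable_one : Integrable (fun x : ℝ => x) (gaussianReal 0 1) := by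
  refine integrable_gauss01 measurable_id ?_
  have h := integrable_rpow_mul_exp_neg_mul_sq (b := 1/2) (by norm_num) (s := 1) (by norm_num)
  simpa [Real.rpow_one] using h

lemma gauss01_integrable_sq : Integrable (fun x : ℝ => x ^ 2) (gaussianReal 0 1) := by
  refine integrable_gauss01 (measurable_id.pow_const 2) ?_
  have h := integrable_rpow_mul_exp_neg_mul_sq (b := 1/2) (by norm_num) (s := 2) (by norm_num)
  simp_rw [show ((2:ℝ)) = ((2:ℕ):ℝ) by norm_num, Real.rpow_natCast] at h
  simpa using h

lemma gauss01_integral_one : ∫ x, x ∂(gaussianReal 0 1) = 0 := by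
  rw [integral_gauss01]
  set f : ℝ → ℝ := fun x => x * ((Real.sqrt (2 * π))⁻¹ * Real.exp (-(1/2) * x ^ 2)) with hf
  have hodd : ∀ x, f (-x) = - f x := by
    intro x
    simp only [hf]
    rw [neg_sq]
    ring
  have h1 : ∫ x, f x = ∫ x, f (-x) := by
    conv_lhs => rw [← Measure.map_neg_eq_self (volume : Measure ℝ)]
    exact (Homeomorph.neg ℝ).measurableEmbedding.integral_map f
  have h2 : ∫ x, f (-x) = - ∫ x, f x := by
    simp_rw [hodd]
    exact integral_neg f
  have : ∫ x, f x = 0 := by linarith [h1.trans h2]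
  exact this

lemma gauss01_integral_sq : ∫ x, x ^ 2 ∂(gaussianReal 0 1) = 1 := by
  rw [integral_gauss01]
  have h1 : ∀ x : ℝ, x ^ 2 * ((Real.sqrt (2 * π))⁻¹ * Real.exp (-(1/2) * x ^ 2))
      = (Real.sqrt (2 * π))⁻¹ * (x ^ 2 * Real.exp (-(1/2) * x ^ 2)) := fun x => by ring
  simp_rw [h1]
  rw [integral_const_mul]
  have h2 : ∫ x : ℝ, x ^ 2 * Real.exp (-(1/2) * x ^ 2)
      = 2 * ∫ x in Ioi (0:ℝ), x ^ 2 * Real.exp (-(1/2) * x ^ 2) := by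
    rw [← integral_comp_abs (f := fun t => t ^ 2 * Real.exp (-(1/2) * t ^ 2))]
    refine integral_congr_ae (Filter.Eventually.of_forall fun x => ?_)
    simp [sq_abs]
  have h3 : ∫ x in Ioi (0:ℝ), x ^ 2 * Real.exp (-(1/2) * x ^ 2) = Real.sqrt (2 * π) / 2 := by
    have h := integral_rpow_mul_exp_neg_mul_rpow (p := 2) (q := 2) (b := 1/2)
      two_pos (by norm_num) (by norm_num)
    simp_rw [show ((2:ℝ)) = ((2:ℕ):ℝ) by norm_num, Real.rpow_natCast] at h
    rw [show ((2:ℕ):ℝ) = (2:ℝ) by norm_num] at h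
    rw [h]
    have hG : Real.Gamma (((2:ℝ) + 1) / 2) = 1 / 2 * Real.sqrt π := by
      rw [show ((2:ℝ) + 1) / 2 = 1/2 + 1 by norm_num,
        Real.Gamma_add_one (by norm_num), Real.Gamma_one_half_eq]
    have hpow : ((1:ℝ)/2) ^ (-((2:ℝ) + 1) / 2) * (1/2) = Real.sqrt 2 := by
      have e1 : ((1:ℝ)/2) ^ (-((2:ℝ) + 1) / 2) * (1/2)
          = ((1:ℝ)/2) ^ (-((2:ℝ) + 1) / 2) * ((1:ℝ)/2) ^ (1:ℝ) := by
        rw [Real.rpow_one]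
      rw [e1, ← Real.rpow_add (by norm_num), show (-((2:ℝ) + 1) / 2 + 1) = -(1/2) by norm_num,
        Real.rpow_neg (by norm_num), ← Real.sqrt_eq_rpow,
        show ((1:ℝ)/2) = (2:ℝ)⁻¹ by norm_num, Real.sqrt_inv, inv_inv]
    rw [hG, hpow, Real.sqrt_mul (by norm_num : (0:ℝ) ≤ 2) π]
    ring
  rw [h2, h3]
  have hs : Real.sqrt (2 * π) ≠ 0 := by positivity
  field_simp


/-- Covariance of two real random variables. -/
noncomputable def cov {Ω : Type*} [MeasurableSpace Ω] (f g : Ω → ℝ)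
    (μ : MeasureTheory.Measure Ω) : ℝ :=
  (∫ ω, f ω * g ω ∂μ) - (∫ ω, f ω ∂μ) * ∫ ω, g ω ∂μ

/-- in the 2-state model (diffusing base state `0` with `τ(0) ∼ Exp(β₂)`,
`ξ(0) = √(2D τ(0)) Z`, transport state `1` with `τ(1) ∼ Exp(β₁)`, `ξ(1) = v τ(1)`,
`τ(0), τ(1), Z` mutually independent), the effective diffusivity
`D_eff := (1/(2E(ΔT)))(Var(ΔX) + v_eff² Var(ΔT) − 2 v_eff Cov(ΔX, ΔT))`, with
`v_eff = v β₂/(β₁+β₂)`, equals `D β₁/(β₁+β₂) + v² β₁ β₂/(β₁+β₂)³`. -/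
theorem two_state_effective_diffusivity
    {Ω : Type*} [MeasurableSpace Ω] (μ : Measure Ω) [IsProbabilityMeasure μ]
    (β₁ β₂ D v : ℝ) (hβ₁ : 0 < β₁) (hβ₂ : 0 < β₂) (hD : 0 < D)
    (τ0 τ1 Z : Ω → ℝ)
    (hτ0meas : Measurable τ0) (hτ1meas : Measurable τ1) (hZmeas : Measurable Z)
    (hτ0law : Measure.map τ0 μ = expMeasure β₂)
    (hτ1law : Measure.map τ1 μ = expMeasure β₁)
    (hZlaw : Measure.map Z μ = gaussianReal 0 1)
    (hindep : iIndepFun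
      ![τ0, τ1, Z] μ) :
    (1 / (2 * ∫ ω, (τ0 ω + τ1 ω) ∂μ)) *
      (variance (fun ω => Real.sqrt (2 * D * τ0 ω) * Z ω + v * τ1 ω) μ +
        (v * β₂ / (β₁ + β₂)) ^ 2 * variance (fun ω => τ0 ω + τ1 ω) μ -
        2 * (v * β₂ / (β₁ + β₂)) *
          cov (fun ω => Real.sqrt (2 * D * τ0 ω) * Z ω + v * τ1 ω)
            (fun ω => τ0 ω + τ1 ω) μ) =
      D * β₁ / (β₁ + β₂) + v ^ 2 * β₁ * β₂ / (β₁ + β₂) ^ 3 := by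
  -- integrability of the basic variables
  have hIτ0 : Integrable τ0 μ := by
    have h := expM_integrable_one hβ₂
    rw [← hτ0law] at h
    exact (integrable_map_measure measurable_id.aestronglyMeasurable
      hτ0meas.aemeasurable).mp h
  have hIτ1 : Integrable τ1 μ := by
    have h := expM_integrable_one hβ₁
    rw [← hτ1law] at h
    exact (integrable_map_measure measurable_id.aestronglyMeasurable
      hτ1meas.aemeasurable).mp h
  have hIZ : Integrable Z μ := by
    have h := gauss01_integrable_one
    rw [← hZlaw] at h
    exact (integrable_map_measure measurable_id.aestronglyMeasurable
      hZmeas.aemeasurable).mp h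
  have hIτ0sq : Integrable (fun ω => τ0 ω ^ 2) μ := by
    have h := expM_integrable_sq hβ₂
    rw [← hτ0law] at h
    exact (integrable_map_measure (measurable_id.pow_const 2).aestronglyMeasurable
      hτ0meas.aemeasurable).mp h
  have hIτ1sq : Integrable (fun ω => τ1 ω ^ 2) μ := by
    have h := expM_integrable_sq hβ₁
    rw [← hτ1law] at h
    exact (integrable_map_measure (measurable_id.pow_const 2).aestronglyMeasurable
      hτ1meas.aemeasurable).mp h
  have hIZsq : Integrable (fun ω => Z ω ^ 2) μ := by
    have h := gauss01_integrable_sq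
    rw [← hZlaw] at h
    exact (integrable_map_measure (measurable_id.pow_const 2).aestronglyMeasurable
      hZmeas.aemeasurable).mp h
  -- moments of the basic variables
  have hEτ0 : ∫ ω, τ0 ω ∂μ = 1 / β₂ := by
    have h := integral_map (μ := μ) (f := fun x : ℝ => x) hτ0meas.aemeasurable
      measurable_id.aestronglyMeasurable
    rw [hτ0law] at h
    rw [← h]
    exact expM_integral_one hβ₂
  have hEτ1 : ∫ ω, τ1 ω ∂μ = 1 / β₁ := by
    have h := integral_map (μ := μ) (f := fun x : ℝ => x) hτ1meas.aemeasurable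
      measurable_id.aestronglyMeasurable
    rw [hτ1law] at h
    rw [← h]
    exact expM_integral_one hβ₁
  have hEZ : ∫ ω, Z ω ∂μ = 0 := by
    have h := integral_map (μ := μ) (f := fun x : ℝ => x) hZmeas.aemeasurable
      measurable_id.aestronglyMeasurable
    rw [hZlaw] at h
    rw [← h]
    exact gauss01_integral_one
  have hEτ0sq : ∫ ω, τ0 ω ^ 2 ∂μ = 2 / β₂ ^ 2 := by
    have h := integral_map (μ := μ) (f := fun x : ℝ => x ^ 2) hτ0meas.aemeasurable
      (measurable_id.pow_const 2).aestronglyMeasurable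
    rw [hτ0law] at h
    rw [← h]
    exact expM_integral_sq hβ₂
  have hEτ1sq : ∫ ω, τ1 ω ^ 2 ∂μ = 2 / β₁ ^ 2 := by
    have h := integral_map (μ := μ) (f := fun x : ℝ => x ^ 2) hτ1meas.aemeasurable
      (measurable_id.pow_const 2).aestronglyMeasurable
    rw [hτ1law] at h
    rw [← h]
    exact expM_integral_sq hβ₁
  have hEZsq : ∫ ω, Z ω ^ 2 ∂μ = 1 := by
    have h := integral_map (μ := μ) (f := fun x : ℝ => x ^ 2) hZmeas.aemeasurable
      (measurable_id.pow_const 2).aestronglyMeasurable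
    rw [hZlaw] at h
    rw [← h]
    exact gauss01_integral_sq
  -- τ0 is a.e. nonnegative
  have hτ0nn : ∀ᵐ ω ∂μ, 0 ≤ τ0 ω := by
    have h := expM_ae_nonneg β₂
    rw [← hτ0law] at h
    exact (ae_map_iff hτ0meas.aemeasurable measurableSet_Ici).mp h
  -- independence
  have hmeasv : ∀ i, Measurable (![τ0, τ1, Z] i) := by
    intro i; fin_cases i <;> simpa
  have h01 : IndepFun τ0 τ1 μ := by
    simpa using hindep.indepFun (show (0 : Fin 3) ≠ 1 by decide)
  have h0Z : IndepFun τ0 Z μ := by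
    simpa using hindep.indepFun (show (0 : Fin 3) ≠ 2 by decide)
  have hpairZ : IndepFun (fun ω => (τ0 ω, τ1 ω)) Z μ := by
    simpa using hindep.indepFun_prodMk hmeasv 0 1 2 (by decide) (by decide)
  have hAm : Measurable (fun x : ℝ => Real.sqrt (2 * D * x)) :=
    Real.continuous_sqrt.measurable.comp (measurable_id.const_mul (2 * D))
  have hAZ : IndepFun (fun ω => Real.sqrt (2 * D * τ0 ω)) Z μ :=
    h0Z.comp hAm measurable_id
  have hAτ0Z : IndepFun (fun ω => Real.sqrt (2 * D * τ0 ω) * τ0 ω) Z μ :=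
    h0Z.comp (hAm.mul measurable_id) measurable_id
  have hAτ1Z : IndepFun (fun ω => Real.sqrt (2 * D * τ0 ω) * τ1 ω) Z μ :=
    hpairZ.comp ((hAm.comp measurable_fst).mul measurable_snd) measurable_id
  have hτ0Zsq : IndepFun τ0 (fun ω => Z ω ^ 2) μ :=
    h0Z.comp measurable_id (measurable_id.pow_const 2)
  have hAτ1 : IndepFun (fun ω => Real.sqrt (2 * D * τ0 ω)) τ1 μ :=
    h01.comp hAm measurable_id
  -- integrability of compound expressions
  have hbound : ∀ t : ℝ, Real.sqrt (2 * D * t) ≤ 1 + 2 * D * |t| := by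
    intro t
    calc Real.sqrt (2 * D * t) ≤ 1 + |2 * D * t| := sqrt_le_one_add_abs _
      _ = 1 + 2 * D * |t| := by
          rw [abs_mul, abs_of_pos (by positivity : (0:ℝ) < 2 * D)]
  have hIA : Integrable (fun ω => Real.sqrt (2 * D * τ0 ω)) μ := by
    have hg : Integrable (fun ω => 1 + 2 * D * |τ0 ω|) μ :=
      (integrable_const 1).add ((hIτ0.abs).const_mul (2 * D))
    refine hg.mono ((hAm.comp hτ0meas).aestronglyMeasurable)
      (Filter.Eventually.of_forall fun ω => ?_)
    rw [Real.norm_eq_abs, Real.norm_eq_abs, abs_of_nonneg (Real.sqrt_nonneg _),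
      abs_of_nonneg (by positivity)]
    exact hbound _
  have hIAτ0 : Integrable (fun ω => Real.sqrt (2 * D * τ0 ω) * τ0 ω) μ := by
    have hg : Integrable (fun ω => |τ0 ω| + 2 * D * τ0 ω ^ 2) μ :=
      hIτ0.abs.add (hIτ0sq.const_mul (2 * D))
    refine hg.mono (((hAm.comp hτ0meas).mul hτ0meas).aestronglyMeasurable)
      (Filter.Eventually.of_forall fun ω => ?_)
    rw [Real.norm_eq_abs, Real.norm_eq_abs, abs_mul, abs_of_nonneg (Real.sqrt_nonneg _),
      abs_of_nonneg (by positivity : (0:ℝ) ≤ |τ0 ω| + 2 * D * τ0 ω ^ 2)]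
    have h1 := hbound (τ0 ω)
    have h2 : |τ0 ω| ^ 2 = τ0 ω ^ 2 := sq_abs _
    nlinarith [abs_nonneg (τ0 ω), Real.sqrt_nonneg (2 * D * τ0 ω)]
  have hIAτ1 : Integrable (fun ω => Real.sqrt (2 * D * τ0 ω) * τ1 ω) μ :=
    hAτ1.integrable_mul hIA hIτ1
  have hIAZ : Integrable (fun ω => Real.sqrt (2 * D * τ0 ω) * Z ω) μ :=
    hAZ.integrable_mul hIA hIZ
  have hIAτ0Z : Integrable (fun ω => Real.sqrt (2 * D * τ0 ω) * τ0 ω * Z ω) μ :=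
    hAτ0Z.integrable_mul hIAτ0 hIZ
  have hIAτ1Z : Integrable (fun ω => Real.sqrt (2 * D * τ0 ω) * τ1 ω * Z ω) μ :=
    hAτ1Z.integrable_mul hIAτ1 hIZ
  have hIτ0Zsq : Integrable (fun ω => τ0 ω * Z ω ^ 2) μ :=
    hτ0Zsq.integrable_mul hIτ0 hIZsq
  have hIτ0τ1 : Integrable (fun ω => τ0 ω * τ1 ω) μ :=
    h01.integrable_mul hIτ0 hIτ1
  -- expectations of products
  have hEAZ : ∫ ω, Real.sqrt (2 * D * τ0 ω) * Z ω ∂μ = 0 := by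
    calc ∫ ω, Real.sqrt (2 * D * τ0 ω) * Z ω ∂μ
        = MeasureTheory.integral μ ((fun ω => Real.sqrt (2 * D * τ0 ω)) * Z) := rfl
      _ = (∫ ω, Real.sqrt (2 * D * τ0 ω) ∂μ) * ∫ ω, Z ω ∂μ :=
          hAZ.integral_mul_eq_mul_integral hIA.aestronglyMeasurable hIZ.aestronglyMeasurable
      _ = 0 := by rw [hEZ, mul_zero]
  have hEAτ0Z : ∫ ω, Real.sqrt (2 * D * τ0 ω) * τ0 ω * Z ω ∂μ = 0 := by
    calc ∫ ω, Real.sqrt (2 * D * τ0 ω) * τ0 ω * Z ω ∂μ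
        = MeasureTheory.integral μ ((fun ω => Real.sqrt (2 * D * τ0 ω) * τ0 ω) * Z) := rfl
      _ = (∫ ω, Real.sqrt (2 * D * τ0 ω) * τ0 ω ∂μ) * ∫ ω, Z ω ∂μ :=
          hAτ0Z.integral_mul_eq_mul_integral hIAτ0.aestronglyMeasurable hIZ.aestronglyMeasurable
      _ = 0 := by rw [hEZ, mul_zero]
  have hEAτ1Z : ∫ ω, Real.sqrt (2 * D * τ0 ω) * τ1 ω * Z ω ∂μ = 0 := by
    calc ∫ ω, Real.sqrt (2 * D * τ0 ω) * τ1 ω * Z ω ∂μ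
        = MeasureTheory.integral μ ((fun ω => Real.sqrt (2 * D * τ0 ω) * τ1 ω) * Z) := rfl
      _ = (∫ ω, Real.sqrt (2 * D * τ0 ω) * τ1 ω ∂μ) * ∫ ω, Z ω ∂μ :=
          hAτ1Z.integral_mul_eq_mul_integral hIAτ1.aestronglyMeasurable hIZ.aestronglyMeasurable
      _ = 0 := by rw [hEZ, mul_zero]
  have hEτ0Zsq : ∫ ω, τ0 ω * Z ω ^ 2 ∂μ = 1 / β₂ := by
    calc ∫ ω, τ0 ω * Z ω ^ 2 ∂μ
        = MeasureTheory.integral μ (τ0 * fun ω => Z ω ^ 2) := rfl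
      _ = (∫ ω, τ0 ω ∂μ) * ∫ ω, Z ω ^ 2 ∂μ :=
          hτ0Zsq.integral_mul_eq_mul_integral hIτ0.aestronglyMeasurable hIZsq.aestronglyMeasurable
      _ = 1 / β₂ := by rw [hEτ0, hEZsq, mul_one]
  have hEτ0τ1 : ∫ ω, τ0 ω * τ1 ω ∂μ = (1 / β₂) * (1 / β₁) := by
    calc ∫ ω, τ0 ω * τ1 ω ∂μ
        = MeasureTheory.integral μ (τ0 * τ1) := rfl
      _ = (∫ ω, τ0 ω ∂μ) * ∫ ω, τ1 ω ∂μ :=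
          h01.integral_mul_eq_mul_integral hIτ0.aestronglyMeasurable hIτ1.aestronglyMeasurable
      _ = (1 / β₂) * (1 / β₁) := by rw [hEτ0, hEτ1]
  -- a.e. identity for the square of the diffusive jump
  have hAZsq_ae : (fun ω => (Real.sqrt (2 * D * τ0 ω) * Z ω) ^ 2)
      =ᵐ[μ] (fun ω => 2 * D * (τ0 ω * Z ω ^ 2)) := by
    filter_upwards [hτ0nn] with ω hω
    rw [mul_pow, Real.sq_sqrt (by positivity : (0:ℝ) ≤ 2 * D * τ0 ω)]
    ring
  have hIAZsq : Integrable (fun ω => (Real.sqrt (2 * D * τ0 ω) * Z ω) ^ 2) μ :=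
    (hIτ0Zsq.const_mul (2 * D)).congr hAZsq_ae.symm
  have hEAZsq : ∫ ω, (Real.sqrt (2 * D * τ0 ω) * Z ω) ^ 2 ∂μ = 2 * D * (1 / β₂) := by
    rw [integral_congr_ae hAZsq_ae, integral_const_mul, hEτ0Zsq]
  -- expectations of the compound variables
  have hEX : ∫ ω, (Real.sqrt (2 * D * τ0 ω) * Z ω + v * τ1 ω) ∂μ = v * (1 / β₁) := by
    rw [integral_add hIAZ (hIτ1.const_mul v), hEAZ, integral_const_mul, hEτ1, zero_add]
  have hET : ∫ ω, (τ0 ω + τ1 ω) ∂μ = 1 / β₂ + 1 / β₁ := by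
    rw [integral_add hIτ0 hIτ1, hEτ0, hEτ1]
  -- MemLp facts
  have hXmem : MemLp (fun ω => Real.sqrt (2 * D * τ0 ω) * Z ω + v * τ1 ω) 2 μ := by
    have h1 : MemLp (fun ω => Real.sqrt (2 * D * τ0 ω) * Z ω) 2 μ :=
      (memLp_two_iff_integrable_sq
        (((hAm.comp hτ0meas).mul hZmeas).aestronglyMeasurable)).mpr hIAZsq
    have h2 : MemLp (fun ω => v * τ1 ω) 2 μ := by
      refine (memLp_two_iff_integrable_sq
        ((hτ1meas.const_mul v).aestronglyMeasurable)).mpr ?_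
      refine (hIτ1sq.const_mul (v ^ 2)).congr
        (Filter.Eventually.of_forall fun ω => ?_)
      ring
    exact h1.add h2
  have hTmem : MemLp (fun ω => τ0 ω + τ1 ω) 2 μ := by
    have h1 : MemLp τ0 2 μ :=
      (memLp_two_iff_integrable_sq hτ0meas.aestronglyMeasurable).mpr hIτ0sq
    have h2 : MemLp τ1 2 μ :=
      (memLp_two_iff_integrable_sq hτ1meas.aestronglyMeasurable).mpr hIτ1sq
    exact h1.add h2
  -- variance of ΔX
  have hVarX : variance (fun ω => Real.sqrt (2 * D * τ0 ω) * Z ω + v * τ1 ω) μ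
      = 2 * D * (1 / β₂) + v ^ 2 * (2 / β₁ ^ 2) - (v * (1 / β₁)) ^ 2 := by
    rw [variance_eq_sub hXmem]
    have hX2 : (fun ω => Real.sqrt (2 * D * τ0 ω) * Z ω + v * τ1 ω) ^ 2
        = fun ω => (Real.sqrt (2 * D * τ0 ω) * Z ω) ^ 2
            + (2 * v) * (Real.sqrt (2 * D * τ0 ω) * τ1 ω * Z ω)
            + v ^ 2 * τ1 ω ^ 2 := by
      funext ω
      simp only [Pi.pow_apply]
      ring
    have hI12 : Integrable (fun ω => (Real.sqrt (2 * D * τ0 ω) * Z ω) ^ 2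
        + (2 * v) * (Real.sqrt (2 * D * τ0 ω) * τ1 ω * Z ω)) μ :=
      hIAZsq.add (hIAτ1Z.const_mul (2 * v))
    rw [hX2, integral_add hI12 (hIτ1sq.const_mul (v ^ 2)),
      integral_add hIAZsq (hIAτ1Z.const_mul (2 * v)),
      integral_const_mul, integral_const_mul, hEAZsq, hEAτ1Z, hEτ1sq, hEX]
    ring
  -- variance of ΔT
  have hVarT : variance (fun ω => τ0 ω + τ1 ω) μ
      = 2 / β₂ ^ 2 + 2 * ((1 / β₂) * (1 / β₁)) + 2 / β₁ ^ 2
        - (1 / β₂ + 1 / β₁) ^ 2 := by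
    rw [variance_eq_sub hTmem]
    have hT2 : (fun ω => τ0 ω + τ1 ω) ^ 2
        = fun ω => τ0 ω ^ 2 + 2 * (τ0 ω * τ1 ω) + τ1 ω ^ 2 := by
      funext ω
      simp only [Pi.pow_apply]
      ring
    have hI12 : Integrable (fun ω => τ0 ω ^ 2 + 2 * (τ0 ω * τ1 ω)) μ :=
      hIτ0sq.add (hIτ0τ1.const_mul 2)
    rw [hT2, integral_add hI12 hIτ1sq,
      integral_add hIτ0sq (hIτ0τ1.const_mul 2),
      integral_const_mul, hEτ0sq, hEτ0τ1, hEτ1sq, hET]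
  -- covariance of ΔX and ΔT
  have hCov : cov (fun ω => Real.sqrt (2 * D * τ0 ω) * Z ω + v * τ1 ω)
      (fun ω => τ0 ω + τ1 ω) μ
      = (v * ((1 / β₂) * (1 / β₁)) + v * (2 / β₁ ^ 2))
        - (v * (1 / β₁)) * (1 / β₂ + 1 / β₁) := by
    rw [cov]
    have hXT : (fun ω => (Real.sqrt (2 * D * τ0 ω) * Z ω + v * τ1 ω) * (τ0 ω + τ1 ω))
        = fun ω => (Real.sqrt (2 * D * τ0 ω) * τ0 ω * Z ω
            + Real.sqrt (2 * D * τ0 ω) * τ1 ω * Z ω)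
            + (v * (τ0 ω * τ1 ω) + v * τ1 ω ^ 2) := by
      funext ω
      ring
    have hI12 : Integrable (fun ω => Real.sqrt (2 * D * τ0 ω) * τ0 ω * Z ω
        + Real.sqrt (2 * D * τ0 ω) * τ1 ω * Z ω) μ := hIAτ0Z.add hIAτ1Z
    have hI34 : Integrable (fun ω => v * (τ0 ω * τ1 ω) + v * τ1 ω ^ 2) μ :=
      (hIτ0τ1.const_mul v).add (hIτ1sq.const_mul v)
    rw [hXT, integral_add hI12 hI34,
      integral_add hIAτ0Z hIAτ1Z,
      integral_add (hIτ0τ1.const_mul v) (hIτ1sq.const_mul v),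
      integral_const_mul, integral_const_mul, hEAτ0Z, hEAτ1Z, hEτ0τ1, hEτ1sq, hEX, hET]
    ring
  -- put everything together
  rw [hVarX, hVarT, hCov, hET]
  have h12 : β₁ + β₂ ≠ 0 := by positivity
  have hb1 : β₁ ≠ 0 := ne_of_gt hβ₁
  have hb2 : β₂ ≠ 0 := ne_of_gt hβ₂
  have hden : 2 * (1 / β₂ + 1 / β₁) ≠ 0 := by positivity
  field_simp
  ring
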